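/- Let n ∈ ℤ and define Γ_n(s) = ∏_{j=0}^{|n|−1} (is + 1/2 + j)^{−1}·(−is + 1/2 + j). Then for every complex number z = σ + it with σ ∈ ℝ and |t| ≤ min(1/4, 1/(1+|n|)), one has |1/Γ_n(z)| ≤ C for an absolute constant C independent of n. -/

import Mathlib

noncomputable section

/-- `Γ_n(s) = ∏_{j=0}^{|n|−1} (is + 1/2 + j)⁻¹ · (−is + 1/2 + j)`. -/
def Gam (n : ℤ) (z : ℂ) : ℂ :=
  ∏ j ∈ Finset.range n.natAbs,
    ((Complex.I * z + 1/2 + (j : ℂ))⁻¹ * (-(Complex.I * z) + 1/2 + (j : ℂ)))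

lemma factor_bound (z : ℂ) (j : ℕ) (ht : |z.im| ≤ 1/4) :
    ‖Complex.I * z + 1/2 + (j : ℂ)‖ ≤
      (1 + 8 * |z.im|) * ‖-(Complex.I * z) + 1/2 + (j : ℂ)‖ := by
  set w := Complex.I * z + 1/2 + (j : ℂ)
  set w' := -(Complex.I * z) + 1/2 + (j : ℂ)
  have h1 : (0:ℝ) ≤ ‖w‖ := norm_nonneg _
  have h2 : (0:ℝ) ≤ ‖w'‖ := norm_nonneg _
  have hc : (0:ℝ) ≤ 1 + 8 * |z.im| := by positivity
  have hsq1 : ‖w‖^2 = (1/2 + j - z.im)^2 + z.re^2 := by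
    rw [Complex.sq_norm, Complex.normSq_apply]
    simp [w, Complex.add_re, Complex.add_im, Complex.mul_re, Complex.mul_im]
    ring
  have hsq2 : ‖w'‖^2 = (1/2 + j + z.im)^2 + z.re^2 := by
    rw [Complex.sq_norm, Complex.normSq_apply]
    simp [w', Complex.add_re, Complex.add_im, Complex.mul_re, Complex.mul_im]
    ring
  have habs := abs_le.mp ht
  have hj : (0:ℝ) ≤ (j:ℝ) := Nat.cast_nonneg j
  have hu : (0:ℝ) ≤ |z.im| := abs_nonneg z.im
  have hlin : 1/2 + (j:ℝ) - z.im ≤ (1 + 8*|z.im|) * (1/2 + j + z.im) := by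
    nlinarith [le_abs_self z.im, neg_abs_le z.im, mul_nonneg hu hj,
      mul_nonneg hu (by linarith : (0:ℝ) ≤ 1/4 - |z.im|)]
  have h0 : (0:ℝ) ≤ 1/2 + (j:ℝ) - z.im := by linarith
  have hsqle : (1/2 + (j:ℝ) - z.im)^2 ≤ ((1 + 8*|z.im|) * (1/2 + j + z.im))^2 :=
    pow_le_pow_left₀ h0 hlin 2
  have h1le : (1:ℝ) ≤ (1 + 8*|z.im|)^2 := by nlinarith
  have key : ‖w‖^2 ≤ ((1 + 8 * |z.im|) * ‖w'‖)^2 := by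
    rw [mul_pow, hsq1, hsq2]
    rw [mul_pow] at hsqle
    nlinarith [sq_nonneg z.re]
  nlinarith [key, mul_nonneg hc h2]

/-- `1/Γ_n` is bounded, uniformly in `n`, on the horizontal strip
`{σ + it : |t| ≤ min(1/4, 1/(1+|n|))}`. -/
theorem stmt_5 : ∃ C > 0, ∀ n : ℤ, ∀ z : ℂ,
    |z.im| ≤ min (1/4 : ℝ) (1 / (1 + |(n : ℝ)|)) → ‖(Gam n z)⁻¹‖ ≤ C := by
  refine ⟨Real.exp 8, Real.exp_pos 8, fun n z hz => ?_⟩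
  set N := n.natAbs with hN
  have hNn : |(n:ℝ)| = (N:ℝ) := by
    rw [hN, Nat.cast_natAbs, Int.cast_abs]
  have ht4 : |z.im| ≤ 1/4 := hz.trans (min_le_left _ _)
  have htN : |z.im| ≤ 1 / (1 + (N:ℝ)) := by
    have := hz.trans (min_le_right _ _)
    rwa [hNn] at this
  have hNpos : (0:ℝ) < 1 + (N:ℝ) := by positivity
  rw [Gam, norm_inv, norm_prod, ← Finset.prod_inv_distrib]
  have step : ∀ j ∈ Finset.range N,
      (‖(Complex.I * z + 1/2 + (j : ℂ))⁻¹ * (-(Complex.I * z) + 1/2 + (j : ℂ))‖)⁻¹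
        ≤ Real.exp (8 / (1 + (N:ℝ))) := by
    intro j _
    have habs := abs_le.mp ht4
    have hw' : ‖-(Complex.I * z) + 1/2 + (j : ℂ)‖ > 0 := by
      have hre : (-(Complex.I * z) + 1/2 + (j : ℂ)).re > 0 := by
        simp [Complex.add_re, Complex.mul_re]
        nlinarith [Nat.cast_nonneg (α := ℝ) j]
      have : (-(Complex.I * z) + 1/2 + (j : ℂ)) ≠ 0 := fun h => by
        rw [h] at hre; simp at hre
      exact norm_pos_iff.mpr this
    rw [norm_mul, norm_inv, inv_mul_eq_div, inv_div]
    rw [div_le_iff₀ hw']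
    calc ‖Complex.I * z + 1/2 + (j : ℂ)‖
        ≤ (1 + 8 * |z.im|) * ‖-(Complex.I * z) + 1/2 + (j : ℂ)‖ :=
          factor_bound z j ht4
      _ ≤ Real.exp (8 / (1 + (N:ℝ))) * ‖-(Complex.I * z) + 1/2 + (j : ℂ)‖ := by
          apply mul_le_mul_of_nonneg_right _ hw'.le
          calc 1 + 8 * |z.im| ≤ 1 + 8 * (1 / (1 + (N:ℝ))) := by linarith
            _ = 8 / (1 + (N:ℝ)) + 1 := by ring
            _ ≤ Real.exp (8 / (1 + (N:ℝ))) := Real.add_one_le_exp _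
  calc (∏ j ∈ Finset.range N,
        (‖(Complex.I * z + 1/2 + (j : ℂ))⁻¹ * (-(Complex.I * z) + 1/2 + (j : ℂ))‖)⁻¹)
      ≤ ∏ _j ∈ Finset.range N, Real.exp (8 / (1 + (N:ℝ))) := by
        apply Finset.prod_le_prod (fun j _ => by positivity) step
    _ = Real.exp (8 / (1 + (N:ℝ))) ^ N := by simp
    _ = Real.exp ((N:ℝ) * (8 / (1 + (N:ℝ)))) := by rw [← Real.exp_nat_mul]
    _ ≤ Real.exp 8 := by
        apply Real.exp_le_exp.mpr
        rw [mul_div_assoc'] at *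
        rw [div_le_iff₀ hNpos]
        nlinarith [Nat.cast_nonneg (α := ℝ) N]
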